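/- arXiv:2005.05484 — 3 statements merged into one kernel-verified Lean document; each statement's English description precedes it below -/
import Mathlib

section
/- For every nonzero integer m and every integer n, the finite sets of rational numbers {12^m, 2^m, 24^{−m}} and {4^n, 3^n, 12^{−n}} are distinct. Consequently, for A = diag(12, 2, 1/24) and B = diag(4, 3, 1/12) in SL₃(ℚ), no nonzero powers A^m and B^n have the same multiset of eigenvalues. -/
open Matrix Polynomial in
private lemma diag_zpow' (v : Fin 3 → ℚ) (hv : ∀ i, v i ≠ 0) (m : ℤ) :
    (Matrix.diagonal v) ^ m = Matrix.diagonal (fun i => v i ^ m) := by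
  obtain ⟨k, rfl | rfl⟩ := m.eq_nat_or_neg
  · rw [zpow_natCast, Matrix.diagonal_pow]
    exact congrArg Matrix.diagonal (funext fun i => by
      rw [Pi.pow_apply, zpow_natCast])
  · rw [Matrix.zpow_neg_natCast, Matrix.diagonal_pow]
    refine Matrix.inv_eq_right_inv ?_
    rw [Matrix.diagonal_mul_diagonal, ← Matrix.diagonal_one]
    exact congrArg Matrix.diagonal (funext fun i => by
      rw [Pi.pow_apply, ← zpow_natCast (v i), ← zpow_add₀ (hv i)]
      simp)

open Polynomial in
private lemma charpoly_diag' (d : Fin 3 → ℚ) :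
    (Matrix.diagonal d).charpoly = ∏ i, (X - C (d i)) := by
  rw [Matrix.charpoly_of_upperTriangular _ (Matrix.blockTriangular_diagonal d)]
  exact Finset.prod_congr rfl fun i _ => by rw [Matrix.diagonal_apply_eq]

open Polynomial in
private lemma roots_diag' (d : Fin 3 → ℚ) :
    (Matrix.diagonal d).charpoly.roots = {d 0, d 1, d 2} := by
  rw [charpoly_diag', Fin.prod_univ_three,
    show (X - C (d 0)) * (X - C (d 1)) * (X - C (d 2)) =
      (({d 0, d 1, d 2} : Multiset ℚ).map fun a => X - C a).prod by
        simp [Multiset.map_cons, mul_assoc],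
    Polynomial.roots_multiset_prod_X_sub_C]

private lemma valnat' (k : ℕ) : padicValRat 2 ((k:ℕ):ℚ) = padicValNat 2 k := by
  rw [padicValRat.of_nat]

private lemma v3' : padicValRat 2 (3:ℚ) = 0 := by
  rw [show (3:ℚ) = ((3:ℕ):ℚ) by norm_num, valnat']
  norm_cast
  exact padicValNat.eq_zero_of_not_dvd (by decide)

private lemma v2' : padicValRat 2 (2:ℚ) = 1 := by
  rw [show (2:ℚ) = ((2:ℕ):ℚ) by norm_num, valnat', padicValNat.self (by norm_num)]
  norm_num

private lemma v12' : padicValRat 2 (12:ℚ) = 2 := by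
  rw [show (12:ℚ) = 2^2 * 3 by norm_num, padicValRat.mul (by norm_num) (by norm_num),
    padicValRat.pow _, v2', v3']
  ring

private lemma v24' : padicValRat 2 (24:ℚ) = 3 := by
  rw [show (24:ℚ) = 2^3 * 3 by norm_num, padicValRat.mul (by norm_num) (by norm_num),
    padicValRat.pow _, v2', v3']
  ring

private lemma val2' {q : ℚ} (hq : q ≠ 0) (m : ℤ) :
    padicValRat 2 (q ^ m) = m * padicValRat 2 q := by
  obtain ⟨n, rfl | rfl⟩ := m.eq_nat_or_neg
  · rw [zpow_natCast, padicValRat.pow q]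
  · rw [zpow_neg, zpow_natCast, padicValRat.inv, padicValRat.pow q]; ring

private lemma part1' : ∀ m n : ℤ, m ≠ 0 →
    ({(12 : ℚ) ^ m, 2 ^ m, 24 ^ (-m)} : Finset ℚ) ≠
      ({(4 : ℚ) ^ n, 3 ^ n, 12 ^ (-n)} : Finset ℚ) := by
  intro m n hm heq
  have hmem : (3:ℚ) ^ n ∈ ({(12 : ℚ) ^ m, 2 ^ m, 24 ^ (-m)} : Finset ℚ) := by
    rw [heq]; simp
  have h3 : padicValRat 2 ((3:ℚ) ^ n) = 0 := by rw [val2' (by norm_num), v3']; ring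
  simp only [Finset.mem_insert, Finset.mem_singleton] at hmem
  rcases hmem with h | h | h <;> rw [h] at h3
  · rw [val2' (by norm_num), v12'] at h3; omega
  · rw [val2' (by norm_num), v2'] at h3; omega
  · rw [val2' (by norm_num), v24'] at h3; omega

theorem stmt_2 :
    (∀ m n : ℤ, m ≠ 0 →
      ({(12 : ℚ) ^ m, 2 ^ m, 24 ^ (-m)} : Finset ℚ) ≠
        ({(4 : ℚ) ^ n, 3 ^ n, 12 ^ (-n)} : Finset ℚ)) ∧
    (∀ A B : GL (Fin 3) ℚ,
      (A : Matrix (Fin 3) (Fin 3) ℚ) = Matrix.diagonal ![12, 2, 1/24] →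
      (B : Matrix (Fin 3) (Fin 3) ℚ) = Matrix.diagonal ![4, 3, 1/12] →
      ∀ m n : ℤ, m ≠ 0 → n ≠ 0 →
        ((A ^ m : GL (Fin 3) ℚ) : Matrix (Fin 3) (Fin 3) ℚ).charpoly.roots ≠
          ((B ^ n : GL (Fin 3) ℚ) : Matrix (Fin 3) (Fin 3) ℚ).charpoly.roots) := by
  refine ⟨part1', ?_⟩
  intro A B hA hB m n hm hn hEq
  have h1 : ((A ^ m : GL (Fin 3) ℚ) : Matrix (Fin 3) (Fin 3) ℚ) =
      Matrix.diagonal ![(12:ℚ) ^ m, 2 ^ m, 24 ^ (-m)] := by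
    rw [Matrix.coe_units_zpow, hA,
      diag_zpow' _ (fun i => by fin_cases i <;> norm_num)]
    exact congrArg Matrix.diagonal (funext fun i => by
      fin_cases i <;> simp)
  have h2 : ((B ^ n : GL (Fin 3) ℚ) : Matrix (Fin 3) (Fin 3) ℚ) =
      Matrix.diagonal ![(4:ℚ) ^ n, 3 ^ n, 12 ^ (-n)] := by
    rw [Matrix.coe_units_zpow, hB,
      diag_zpow' _ (fun i => by fin_cases i <;> norm_num)]
    exact congrArg Matrix.diagonal (funext fun i => by
      fin_cases i <;> simp)
  rw [h1, h2, roots_diag', roots_diag'] at hEq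
  simp only [Matrix.cons_val_zero, Matrix.cons_val_one, Matrix.head_cons,
    Matrix.cons_val_two, Matrix.tail_cons] at hEq
  apply part1' m n hm
  have := congrArg Multiset.toFinset hEq
  simpa [Multiset.toFinset_cons, Multiset.toFinset_singleton] using this
end

section
/- Let K be a field equipped with a valuation v (with values in a linearly ordered abelian group, written additively, together with ∞), and for a nonzero polynomial f = Σ aᵢ Xⁱ over K define w(f) = minᵢ v(aᵢ). Then for all nonzero polynomials f, g ∈ K[X], one has w(fg) = w(f) + w(g). -/
open Polynomial Finset

section aux

variable {K Γ₀ : Type*} [Field K] [LinearOrderedCommGroupWithZero Γ₀]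
  (v : Valuation K Γ₀)

/-- v of every coefficient is bounded by the sup'. -/
lemma aux_coeff_le (f : Polynomial K) (hf : f ≠ 0) (n : ℕ) :
    v (f.coeff n) ≤ f.support.sup' (Polynomial.support_nonempty.mpr hf)
      (fun i => v (f.coeff i)) := by
  by_cases h : n ∈ f.support
  · exact Finset.le_sup' (fun i => v (f.coeff i)) h
  · simp only [Polynomial.notMem_support_iff] at h
    rw [h, map_zero]
    exact zero_le'

lemma aux_sup_ne_zero (f : Polynomial K) (hf : f ≠ 0) :
    f.support.sup' (Polynomial.support_nonempty.mpr hf)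
      (fun i => v (f.coeff i)) ≠ 0 := by
  obtain ⟨n, hn⟩ := Polynomial.support_nonempty.mpr hf
  have h1 : v (f.coeff n) ≠ 0 := by
    simpa using Polynomial.mem_support_iff.mp hn
  intro h
  exact h1 (le_antisymm (h ▸ Finset.le_sup' (fun i => v (f.coeff i)) hn) zero_le')

/-- There is a minimal index achieving the sup. -/
lemma aux_exists_min (f : Polynomial K) (hf : f ≠ 0) :
    ∃ i : ℕ, v (f.coeff i) = f.support.sup' (Polynomial.support_nonempty.mpr hf)
        (fun i => v (f.coeff i)) ∧
      ∀ k < i, v (f.coeff k) < f.support.sup' (Polynomial.support_nonempty.mpr hf)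
        (fun i => v (f.coeff i)) := by
  obtain ⟨n, _, hn⟩ := Finset.exists_mem_eq_sup' (Polynomial.support_nonempty.mpr hf)
    (fun i => v (f.coeff i))
  have hex : ∃ i : ℕ, v (f.coeff i) = f.support.sup' (Polynomial.support_nonempty.mpr hf)
      (fun i => v (f.coeff i)) := ⟨n, hn.symm⟩
  refine ⟨Nat.find hex, Nat.find_spec hex, fun k hk => ?_⟩
  exact lt_of_le_of_ne (aux_coeff_le v f hf k) (Nat.find_min hex hk)

end aux

theorem stmt_3 {K Γ₀ : Type*} [Field K] [LinearOrderedCommGroupWithZero Γ₀]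
    (v : Valuation K Γ₀) (f g : Polynomial K) (hf : f ≠ 0) (hg : g ≠ 0) :
    (f * g).support.sup' (Polynomial.support_nonempty.mpr (mul_ne_zero hf hg))
        (fun i => v ((f * g).coeff i)) =
      f.support.sup' (Polynomial.support_nonempty.mpr hf) (fun i => v (f.coeff i)) *
        g.support.sup' (Polynomial.support_nonempty.mpr hg) (fun i => v (g.coeff i)) := by
  classical
  set wf := f.support.sup' (Polynomial.support_nonempty.mpr hf) (fun i => v (f.coeff i))
    with hwf
  set wg := g.support.sup' (Polynomial.support_nonempty.mpr hg) (fun i => v (g.coeff i))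
    with hwg
  have hwf0 : wf ≠ 0 := aux_sup_ne_zero v f hf
  have hwg0 : wg ≠ 0 := aux_sup_ne_zero v g hg
  obtain ⟨i, hi, hi'⟩ := aux_exists_min v f hf
  obtain ⟨j, hj, hj'⟩ := aux_exists_min v g hg
  -- key: the coefficient at i + j has valuation exactly wf * wg
  have hkey : v ((f * g).coeff (i + j)) = wf * wg := by
    rw [Polynomial.coeff_mul]
    have := Valuation.map_sum_eq_of_lt v (s := Finset.HasAntidiagonal.antidiagonal (i + j))
      (f := fun p => f.coeff p.1 * g.coeff p.2) (j := (i, j))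
      (by simp) ?_
    · rw [this, v.map_mul, hi, hj]
    · rintro ⟨p, q⟩ hpq
      simp only [Finset.mem_sdiff, Finset.HasAntidiagonal.mem_antidiagonal, Finset.mem_singleton] at hpq
      obtain ⟨hsum, hne⟩ := hpq
      rw [v.map_mul, v.map_mul, hi, hj]
      rcases lt_trichotomy p i with hp | hp | hp
      · calc v (f.coeff p) * v (g.coeff q) ≤ v (f.coeff p) * wg :=
              mul_le_mul_right (aux_coeff_le v g hg q) _
          _ < wf * wg := by
              rw [mul_comm (v (f.coeff p)), mul_comm wf]
              exact (mul_le_mul_of_nonneg_right (le_refl wg) zero_le').trans_lt (mul_lt_mul_of_pos_left (hi' p hp) (zero_lt_iff.mpr hwg0))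
      · exact absurd (by omega : q = j) (fun h => hne (by simp [hp, h]))
      · have hq : q < j := by omega
        calc v (f.coeff p) * v (g.coeff q) ≤ wf * v (g.coeff q) :=
              mul_le_mul_left (aux_coeff_le v f hf p) _
          _ < wf * wg := (mul_le_mul_of_nonneg_right (le_refl wf) zero_le').trans_lt (mul_lt_mul_of_pos_left (hj' q hq) (zero_lt_iff.mpr hwf0))
  apply le_antisymm
  · apply Finset.sup'_le
    intro n _
    rw [Polynomial.coeff_mul]
    apply v.map_sum_le
    intro p _
    rw [v.map_mul]
    exact mul_le_mul' (aux_coeff_le v f hf p.1) (aux_coeff_le v g hg p.2)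
  · rw [← hkey]
    have hne : (i + j) ∈ (f * g).support := by
      rw [Polynomial.mem_support_iff]
      intro h
      rw [h] at hkey
      exact mul_ne_zero hwf0 hwg0 (by simpa using hkey.symm)
    exact Finset.le_sup' (fun i => v ((f * g).coeff i)) hne
end

section
/- Let n ≥ 1 and let A ∈ GL_n(ℤ) be a matrix of finite order such that every entry of A − I is divisible by 3. Then A = I. Consequently, the reduction map GL_n(ℤ) → GL_n(ℤ/3ℤ) is injective on every finite subgroup of GL_n(ℤ). -/
open Matrix Finset

private lemma aux_dvd_mul_entries {n : ℕ} {a b : ℤ} {M N : Matrix (Fin n) (Fin n) ℤ}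
    (hM : ∀ i j, a ∣ M i j) (hN : ∀ i j, b ∣ N i j) : ∀ i j, a * b ∣ (M * N) i j := by
  intro i j
  rw [Matrix.mul_apply]
  exact Finset.dvd_sum fun l _ => mul_dvd_mul (hM i l) (hN l j)

private lemma aux_entry_iff {n : ℕ} (X : Matrix (Fin n) (Fin n) ℤ) (i j : Fin n) :
    ((X i j : ZMod 3)) = (1 : Matrix (Fin n) (Fin n) (ZMod 3)) i j ↔
      (3 : ℤ) ∣ (X - 1) i j := by
  have key : (3 : ℤ) ∣ (X - 1) i j ↔ ((X - 1) i j : ZMod 3) = 0 := by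
    rw [show ((X - 1) i j : ZMod 3) = 0 ↔ ((3:ℕ):ℤ) ∣ (X - 1) i j from
      ZMod.intCast_zmod_eq_zero_iff_dvd _ 3]
    norm_num
  rw [key, Matrix.sub_apply]
  push_cast
  rw [sub_eq_zero]
  constructor
  · intro h; rw [h]; by_cases hij : i = j <;> simp [Matrix.one_apply, hij]
  · intro h; rw [h]; by_cases hij : i = j <;> simp [Matrix.one_apply, hij]

private lemma aux_map_eq_one_iff {n : ℕ} (X : Matrix (Fin n) (Fin n) ℤ) :
    ((Int.castRingHom (ZMod 3)).mapMatrix X = 1) ↔ ∀ i j, (3 : ℤ) ∣ (X - 1) i j := by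
  constructor
  · intro h i j
    rw [← aux_entry_iff]
    have := congrFun (congrFun (congrArg (fun M => (M : Matrix (Fin n) (Fin n) (ZMod 3))) h) i) j
    simpa [RingHom.mapMatrix_apply, Matrix.map_apply] using this
  · intro h
    ext i j
    have := (aux_entry_iff X i j).mpr (h i j)
    simpa [RingHom.mapMatrix_apply, Matrix.map_apply] using this

private lemma aux_key {n : ℕ} {q : ℕ} (hq : q.Prime) (X : Matrix (Fin n) (Fin n) ℤ)
    (h3 : ∀ i j, (3 : ℤ) ∣ (X - 1) i j) (hXq : X ^ q = 1) : X = 1 := by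
  classical
  by_contra hX
  obtain ⟨D, hDdef⟩ : ∃ D, D = X - 1 := ⟨_, rfl⟩
  have h1 : X = D + 1 := by rw [hDdef]; abel
  have hD3 : ∀ i j, (3 : ℤ) ∣ D i j := by rw [hDdef]; exact h3
  have hD0 : D ≠ 0 := by
    intro h
    apply hX
    rw [h1, h, zero_add]
  obtain ⟨i0, j0, hd0⟩ : ∃ i j, D i j ≠ 0 := by
    by_contra h; push_neg at h; exact hD0 (Matrix.ext h)
  have h1P : ∀ i j, (3 : ℤ) ^ 1 ∣ D i j := by intro i j; simpa using hD3 i j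
  have hbound : ∀ m, (∀ i j, (3 : ℤ) ^ m ∣ D i j) → m ≤ (D i0 j0).natAbs := by
    intro m hm
    have hle : (3 : ℤ) ^ m ≤ |D i0 j0| :=
      Int.le_of_dvd (abs_pos.mpr hd0) ((dvd_abs _ _).mpr (hm i0 j0))
    have hm3 : (m : ℤ) < (3 : ℤ) ^ m := by
      exact_mod_cast (Nat.lt_pow_self (by norm_num : 1 < 3) : m < 3 ^ m)
    have habs : |D i0 j0| = ((D i0 j0).natAbs : ℤ) := Int.abs_eq_natAbs _
    have : (m : ℤ) ≤ ((D i0 j0).natAbs : ℤ) := by rw [← habs]; linarith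
    exact_mod_cast this
  set k := Nat.findGreatest (fun m => ∀ i j, (3 : ℤ) ^ m ∣ D i j) (D i0 j0).natAbs with hkdef
  have hk : ∀ i j, (3 : ℤ) ^ k ∣ D i j :=
    Nat.findGreatest_spec (P := fun m => ∀ i j, (3 : ℤ) ^ m ∣ D i j) (hbound 1 h1P) h1P
  have hk1 : 1 ≤ k :=
    Nat.le_findGreatest (P := fun m => ∀ i j, (3 : ℤ) ^ m ∣ D i j) (hbound 1 h1P) h1P
  have hknot : ¬ (∀ i j, (3 : ℤ) ^ (k + 1) ∣ D i j) := by
    intro h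
    have hle := Nat.le_findGreatest (P := fun m => ∀ i j, (3 : ℤ) ^ m ∣ D i j) (hbound _ h) h
    omega
  have hD2 : ∀ i j, (3 : ℤ) ^ (2 * k) ∣ (D ^ 2) i j := by
    intro i j
    have h2 := aux_dvd_mul_entries hk hk i j
    rw [← pow_add] at h2
    rw [sq]
    convert h2 using 2
    omega
  by_cases hq3 : q = 3
  · -- q = 3 case
    subst hq3
    have e1 : X ^ 3 = D ^ 3 + (D ^ 2 + D ^ 2 + D ^ 2) + (D + D + D) + 1 := by
      rw [h1]; noncomm_ring
    rw [e1] at hXq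
    have hexp := hXq
    have hent : ∀ i j, (D ^ 3) i j + 3 * (D ^ 2) i j + 3 * D i j = 0 := by
      intro i j
      have h2 := congrFun (congrFun hexp i) j
      simp only [Matrix.add_apply] at h2
      linarith
    have hP2k : ∀ i j, (3 : ℤ) ^ (2 * k) ∣ D i j := by
      intro i j
      have h3D : (3 : ℤ) ^ (2 * k + 1) ∣ 3 * D i j := by
        have hd3 : (3 : ℤ) ^ (2 * k + 1) ∣ (D ^ 3) i j := by
          have h2 := aux_dvd_mul_entries hD2 hk i j
          rw [← pow_add] at h2
          have hpow : (3 : ℤ) ^ (2 * k + 1) ∣ (3 : ℤ) ^ (2 * k + k) := pow_dvd_pow 3 (by omega)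
          have h33 : D ^ 3 = D ^ 2 * D := by rw [pow_succ]
          rw [h33]
          exact dvd_trans hpow h2
        have hd2 : (3 : ℤ) ^ (2 * k + 1) ∣ 3 * (D ^ 2) i j := by
          rw [pow_succ, mul_comm]
          exact mul_dvd_mul_left 3 (hD2 i j)
        have heq : 3 * D i j = -((D ^ 3) i j + 3 * (D ^ 2) i j) := by
          have := hent i j; linarith
        rw [heq]
        exact dvd_neg.mpr (dvd_add hd3 hd2)
      have hps : (3 : ℤ) ^ (2 * k + 1) = 3 * 3 ^ (2 * k) := by
        rw [pow_succ, mul_comm]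
      rw [hps] at h3D
      exact (mul_dvd_mul_iff_left (by norm_num : (3 : ℤ) ≠ 0)).mp h3D
    apply hknot
    intro i j
    exact dvd_trans (pow_dvd_pow 3 (by omega : k + 1 ≤ 2 * k)) (hP2k i j)
  · -- q ≠ 3 case
    obtain ⟨s, hs⟩ : ∃ s, q = s + 2 := ⟨q - 2, by have := hq.two_le; omega⟩
    have hexp : (1 : Matrix (Fin n) (Fin n) ℤ)
        = ∑ m ∈ range (q + 1), (q.choose m) • D ^ m := by
      rw [← hXq]
      conv_lhs => rw [h1]
      rw [(Commute.one_right D).add_pow]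
      refine Finset.sum_congr rfl fun m _ => ?_
      rw [one_pow, mul_one, ← (Nat.cast_commute (q.choose m) (D ^ m)).eq, ← nsmul_eq_mul]
    rw [hs] at hexp
    rw [Finset.sum_range_succ', Finset.sum_range_succ'] at hexp
    simp only [zero_add, pow_zero, Nat.choose_zero_right, one_smul, Nat.choose_one_right,
      pow_one] at hexp
    rw [← hs] at hexp
    obtain ⟨F, hFdef⟩ : ∃ F, F = ∑ m ∈ range (s + 1), (q.choose (m + 1 + 1)) • D ^ (m + 1 + 1) :=
      ⟨_, rfl⟩
    rw [← hFdef] at hexp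
    have hzero : F + q • D = 0 := by
      have h2 : F + q • D + 1 = 1 := hexp.symm
      calc F + q • D = F + q • D + 1 - 1 := by abel
        _ = 1 - 1 := by rw [h2]
        _ = 0 := sub_self 1
    have hF : ∀ i j, (3 : ℤ) ^ (2 * k) ∣ F i j := by
      intro i j
      rw [hFdef, Matrix.sum_apply]
      refine Finset.dvd_sum fun m _ => ?_
      rw [Matrix.smul_apply, nsmul_eq_mul]
      refine Dvd.dvd.mul_left ?_ _
      have hpow : D ^ (m + 1 + 1) = D ^ 2 * D ^ m := by
        rw [← pow_add]; ring_nf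
      rw [hpow]
      have h2 := aux_dvd_mul_entries hD2 (fun i j => (one_dvd _ : (1 : ℤ) ∣ (D ^ m) i j)) i j
      simpa using h2
    have hqD : ∀ i j, (3 : ℤ) ^ (k + 1) ∣ (q : ℤ) * D i j := by
      intro i j
      have h2 := congrFun (congrFun hzero i) j
      simp only [Matrix.add_apply, Matrix.smul_apply, Matrix.zero_apply] at h2
      rw [nsmul_eq_mul] at h2
      have heq : (q : ℤ) * D i j = -F i j := by linarith
      rw [heq, dvd_neg]
      exact dvd_trans (pow_dvd_pow 3 (by omega : k + 1 ≤ 2 * k)) (hF i j)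
    have hcop : IsCoprime ((3 : ℤ) ^ (k + 1)) (q : ℤ) := by
      apply IsCoprime.pow_left
      rw [Int.isCoprime_iff_gcd_eq_one]
      have h2 : Nat.Coprime 3 q := (Nat.coprime_primes Nat.prime_three hq).mpr
        (fun h => hq3 h.symm)
      simpa [Int.gcd] using h2
    apply hknot
    intro i j
    exact hcop.dvd_of_dvd_mul_left (hqD i j)

theorem stmt_11 (n : ℕ) (hn : 1 ≤ n) :
    (∀ A : GL (Fin n) ℤ, IsOfFinOrder A →
      (∀ i j, (3 : ℤ) ∣ ((A : Matrix (Fin n) (Fin n) ℤ) - 1) i j) → A = 1) ∧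
    (∀ H : Subgroup (GL (Fin n) ℤ), Finite H →
      Set.InjOn (Matrix.GeneralLinearGroup.map (n := Fin n) (Int.castRingHom (ZMod 3)))
        (H : Set (GL (Fin n) ℤ))) := by
  have part1 : ∀ A : GL (Fin n) ℤ, IsOfFinOrder A →
      (∀ i j, (3 : ℤ) ∣ ((A : Matrix (Fin n) (Fin n) ℤ) - 1) i j) → A = 1 := by
    intro A hA hdiv
    have hord : orderOf A ≠ 0 := hA.orderOf_pos.ne'
    have hφA : (Int.castRingHom (ZMod 3)).mapMatrix (A : Matrix (Fin n) (Fin n) ℤ) = 1 :=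
      (aux_map_eq_one_iff _).mpr hdiv
    have hord1 : orderOf A = 1 := by
      by_contra hne
      obtain ⟨q, hq, hqd⟩ := Nat.exists_prime_and_dvd hne
      set Y := A ^ (orderOf A / q) with hYdef
      have hYord : orderOf Y = q := orderOf_pow_orderOf_div hord hqd
      have hYq : ((Y : Matrix (Fin n) (Fin n) ℤ)) ^ q = 1 := by
        have h2 : Y ^ q = 1 := by rw [← hYord]; exact pow_orderOf_eq_one Y
        rw [← Units.val_pow_eq_pow_val, h2, Units.val_one]
      have hφY : (Int.castRingHom (ZMod 3)).mapMatrix (Y : Matrix (Fin n) (Fin n) ℤ) = 1 := by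
        have hYm : (Y : Matrix (Fin n) (Fin n) ℤ)
            = (A : Matrix (Fin n) (Fin n) ℤ) ^ (orderOf A / q) := by
          rw [hYdef, Units.val_pow_eq_pow_val]
        rw [hYm, map_pow, hφA, one_pow]
      have hY3 := (aux_map_eq_one_iff _).mp hφY
      have hY1 : (Y : Matrix (Fin n) (Fin n) ℤ) = 1 := aux_key hq _ hY3 hYq
      have hYone : Y = 1 := Units.ext hY1
      rw [hYone, orderOf_one] at hYord
      exact hq.one_lt.ne' hYord.symm
    exact orderOf_eq_one_iff.mp hord1
  refine ⟨part1, ?_⟩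
  intro H hH x hx y hy hxy
  have hmem : x * y⁻¹ ∈ H := H.mul_mem hx (H.inv_mem hy)
  have hfin : IsOfFinOrder (x * y⁻¹) := by
    have h1 : IsOfFinOrder (⟨x * y⁻¹, hmem⟩ : H) := isOfFinOrder_of_finite _
    have h2 := H.subtype.isOfFinOrder h1
    simpa using h2
  have hmap1 : Matrix.GeneralLinearGroup.map (n := Fin n) (Int.castRingHom (ZMod 3))
      (x * y⁻¹) = 1 := by
    rw [_root_.map_mul, _root_.map_inv, hxy, mul_inv_cancel]
  have hφ : (Int.castRingHom (ZMod 3)).mapMatrix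
      ((x * y⁻¹ : GL (Fin n) ℤ) : Matrix (Fin n) (Fin n) ℤ) = 1 := by
    have h2 : Units.map (RingHom.mapMatrix (Int.castRingHom (ZMod 3))).toMonoidHom
        (x * y⁻¹) = 1 := hmap1
    have h3 := congrArg Units.val h2
    rw [Units.coe_map, Units.val_one] at h3
    exact h3
  have hdiv := (aux_map_eq_one_iff _).mp hφ
  have hone : x * y⁻¹ = 1 := part1 _ hfin hdiv
  calc x = x * y⁻¹ * y := by group
    _ = y := by rw [hone, one_mul]
end
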